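/- For every quantum channel Φ, the trace norm contraction coefficient satisfies η_tr(Φ) = (1/2) · sup { λ_max(Φ*(X)) − λ_min(Φ*(X)) : X Hermitian d_B×d_B matrix with ‖X‖_∞ ≤ 1 }, where λ_max and λ_min denote the largest and smallest eigenvalue of a Hermitian matrix and ‖·‖_∞ is the operator norm. -/

import Mathlib

open Matrix Kronecker BigOperators
open scoped ComplexOrder

noncomputable section

/-- Mathlib's former `Matrix.PosSemidef.sqrt` (removed since), restored with its old definition. -/
def Matrix.PosSemidef.sqrt {𝕜 : Type*} [RCLike 𝕜] {n : Type*} [Fintype n] [DecidableEq n]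
    {A : Matrix n n 𝕜} (hA : A.PosSemidef) : Matrix n n 𝕜 :=
  hA.1.eigenvectorUnitary.1 * diagonal ((↑) ∘ (√·) ∘ hA.1.eigenvalues) *
    (star hA.1.eigenvectorUnitary : Matrix n n 𝕜)

/-- The trace norm (sum of singular values) of a complex matrix: `tr √(AᴴA)`. -/
def traceNorm {m n : Type*} [Fintype m] [Fintype n] [DecidableEq n] (A : Matrix m n ℂ) : ℝ :=
  ((Matrix.posSemidef_conjTranspose_mul_self A).sqrt).trace.re

/-- A density matrix: positive semidefinite with trace one. -/
def IsDensity {n : Type*} [Fintype n] [DecidableEq n] (ρ : Matrix n n ℂ) : Prop :=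
  ρ.PosSemidef ∧ ρ.trace = 1

/-- Trace norm contraction coefficient of a map on matrices. -/
def etaTr {dA dB : ℕ} (Φ : Matrix (Fin dA) (Fin dA) ℂ → Matrix (Fin dB) (Fin dB) ℂ) : ℝ :=
  sSup {r : ℝ | ∃ ρ σ : Matrix (Fin dA) (Fin dA) ℂ, IsDensity ρ ∧ IsDensity σ ∧ ρ ≠ σ ∧
    r = traceNorm (Φ ρ - Φ σ) / traceNorm (ρ - σ)}

/-- Optimal success probability for transmitting one of `k` messages through `Φ`. -/
def Psucc {dA dB : ℕ} (Φ : Matrix (Fin dA) (Fin dA) ℂ → Matrix (Fin dB) (Fin dB) ℂ)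
    (k : ℕ) : ℝ :=
  sSup {r : ℝ | ∃ (M : Fin k → Matrix (Fin dB) (Fin dB) ℂ)
      (ρ : Fin k → Matrix (Fin dA) (Fin dA) ℂ),
    (∀ i, (M i).PosSemidef) ∧ (∑ i, M i = 1) ∧ (∀ i, IsDensity (ρ i)) ∧
    r = (1 / (k : ℝ)) * ∑ i, ((M i * Φ (ρ i)).trace).re}

/-- The Euclidean (ℓ₂) norm of a complex vector. -/
def l2norm {n : Type*} [Fintype n] (v : n → ℂ) : ℝ :=
  Real.sqrt (∑ i, ‖v i‖ ^ 2)

/-- Choi state of a map on matrices: `(1/dA) ∑ᵢⱼ Eᵢⱼ ⊗ Φ(Eᵢⱼ)`. -/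
def choi {dA dB : ℕ} (Φ : Matrix (Fin dA) (Fin dA) ℂ → Matrix (Fin dB) (Fin dB) ℂ) :
    Matrix (Fin dA × Fin dB) (Fin dA × Fin dB) ℂ :=
  (dA : ℂ)⁻¹ • ∑ i : Fin dA, ∑ j : Fin dA,
    (Matrix.single i j (1 : ℂ)) ⊗ₖ (Φ (Matrix.single i j (1 : ℂ)))

/-- ℓ² → ℓ² operator norm of a matrix. -/
def opNorm {n : ℕ} (X : Matrix (Fin n) (Fin n) ℂ) : ℝ :=
  sSup {r : ℝ | ∃ v : Fin n → ℂ, l2norm v ≤ 1 ∧ r = l2norm (X.mulVec v)}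

/-- The set of real eigenvalues of a matrix. -/
def realEigenvalues {n : ℕ} (A : Matrix (Fin n) (Fin n) ℂ) : Set ℝ :=
  {r : ℝ | ∃ v : Fin n → ℂ, v ≠ 0 ∧ A.mulVec v = (r : ℂ) • v}

/-- Largest (real) eigenvalue. -/
def lambdaMax {n : ℕ} (A : Matrix (Fin n) (Fin n) ℂ) : ℝ := sSup (realEigenvalues A)

/-- Smallest (real) eigenvalue. -/
def lambdaMin {n : ℕ} (A : Matrix (Fin n) (Fin n) ℂ) : ℝ := sInf (realEigenvalues A)

namespace QC

variable {n : ℕ}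

lemma l2norm_nonneg {m : Type*} [Fintype m] (v : m → ℂ) : 0 ≤ l2norm v := Real.sqrt_nonneg _

lemma l2norm_eq_norm {m : Type*} [Fintype m] (v : m → ℂ) :
    l2norm v = ‖(WithLp.equiv 2 (m → ℂ)).symm v‖ := by
  rw [EuclideanSpace.norm_eq]; rfl

lemma l2norm_sq {m : Type*} [Fintype m] (v : m → ℂ) : l2norm v ^ 2 = ∑ i, ‖v i‖ ^ 2 :=
  Real.sq_sqrt (by positivity)

lemma dot_self_re {m : Type*} [Fintype m] (v : m → ℂ) :
    (star v ⬝ᵥ v).re = ∑ i, ‖v i‖ ^ 2 := by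
  rw [dotProduct, Complex.re_sum]
  congr 1; ext i
  simp only [Pi.star_apply, Complex.star_def, Complex.mul_re, Complex.conj_re,
    Complex.conj_im, Complex.sq_norm, Complex.normSq_apply]
  ring_nf

lemma dot_self_re' {m : Type*} [Fintype m] (v : m → ℂ) :
    (star v ⬝ᵥ v).re = l2norm v ^ 2 := by rw [dot_self_re, l2norm_sq]

lemma abs_dot_le {m : Type*} [Fintype m] (u w : m → ℂ) :
    ‖star u ⬝ᵥ w‖ ≤ l2norm u * l2norm w := by
  have := norm_inner_le_norm (𝕜 := ℂ) ((WithLp.equiv 2 (m → ℂ)).symm u)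
    ((WithLp.equiv 2 (m → ℂ)).symm w)
  rw [WithLp.equiv_symm_apply, EuclideanSpace.inner_toLp_toLp, dotProduct_comm] at this
  rwa [l2norm_eq_norm, l2norm_eq_norm, WithLp.equiv_symm_apply]


section Square
variable {A U : Matrix (Fin n) (Fin n) ℂ}

lemma star_dot_mulVec (U : Matrix (Fin n) (Fin n) ℂ) (v x : Fin n → ℂ) :
    star v ⬝ᵥ (U *ᵥ x) = star (Uᴴ *ᵥ v) ⬝ᵥ x := by
  rw [star_mulVec, conjTranspose_conjTranspose, dotProduct_mulVec]

lemma dot_unitary (hU : Uᴴ * U = 1) (v w : Fin n → ℂ) :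
    star (U *ᵥ v) ⬝ᵥ (U *ᵥ w) = star v ⬝ᵥ w := by
  rw [star_mulVec, dotProduct_mulVec, vecMul_vecMul, hU, vecMul_one]

lemma sum_norm_sq_mulVec_unitary (hU : Uᴴ * U = 1) (v : Fin n → ℂ) :
    ∑ i, ‖(U *ᵥ v) i‖ ^ 2 = ∑ i, ‖v i‖ ^ 2 := by
  rw [← dot_self_re, ← dot_self_re, dot_unitary hU]

lemma l2norm_mulVec_unitary (hU : Uᴴ * U = 1) (v : Fin n → ℂ) :
    l2norm (U *ᵥ v) = l2norm v := by
  unfold l2norm; rw [sum_norm_sq_mulVec_unitary hU]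

/-- The eigenvector unitary as a plain matrix. -/
def EU (hA : A.IsHermitian) : Matrix (Fin n) (Fin n) ℂ := hA.eigenvectorUnitary

lemma EU_star_mul (hA : A.IsHermitian) : (EU hA)ᴴ * EU hA = 1 := by
  simpa [EU, star_eq_conjTranspose] using (Matrix.mem_unitaryGroup_iff'.mp hA.eigenvectorUnitary.2)

lemma EU_mul_star (hA : A.IsHermitian) : EU hA * (EU hA)ᴴ = 1 := by
  simpa [EU, star_eq_conjTranspose] using (Matrix.mem_unitaryGroup_iff.mp hA.eigenvectorUnitary.2)

lemma EU_star_mul_star (hA : A.IsHermitian) : ((EU hA)ᴴ)ᴴ * (EU hA)ᴴ = 1 := by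
  rw [conjTranspose_conjTranspose]; exact EU_mul_star hA

lemma spec (hA : A.IsHermitian) :
    A = EU hA * diagonal (fun i => (hA.eigenvalues i : ℂ)) * (EU hA)ᴴ := by
  have := hA.spectral_theorem
  simpa [EU, star_eq_conjTranspose, Function.comp_def] using this

/-- The `j`-th column of the eigenvector unitary. -/
def col (hA : A.IsHermitian) (j : Fin n) : Fin n → ℂ := EU hA *ᵥ Pi.single j 1

lemma l2norm_single (j : Fin n) : l2norm (Pi.single j (1:ℂ) : Fin n → ℂ) = 1 := by
  unfold l2norm
  rw [Finset.sum_eq_single j]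
  · simp
  · intro b _ hb; simp [Pi.single_apply, hb]
  · simp

lemma l2norm_col (hA : A.IsHermitian) (j : Fin n) : l2norm (col hA j) = 1 := by
  rw [col, l2norm_mulVec_unitary (EU_star_mul hA), l2norm_single]

lemma col_ne_zero (hA : A.IsHermitian) (j : Fin n) : col hA j ≠ 0 := by
  intro h
  have := l2norm_col hA j
  rw [h] at this
  simp [l2norm] at this

lemma mulVec_col (hA : A.IsHermitian) (j : Fin n) :
    A *ᵥ col hA j = (hA.eigenvalues j : ℂ) • col hA j := by
  have h1 : col hA j = ⇑(hA.eigenvectorBasis j) := hA.eigenvectorUnitary_mulVec j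
  rw [h1, hA.mulVec_eigenvectorBasis]
  ext i
  simp [Pi.smul_apply, Complex.real_smul]

lemma eig_mem (hA : A.IsHermitian) (j : Fin n) :
    hA.eigenvalues j ∈ realEigenvalues A :=
  ⟨col hA j, col_ne_zero hA j, mulVec_col hA j⟩

lemma dot_mulVec_re (hA : A.IsHermitian) (v : Fin n → ℂ) :
    (star v ⬝ᵥ (A *ᵥ v)).re = ∑ i, hA.eigenvalues i * ‖((EU hA)ᴴ *ᵥ v) i‖ ^ 2 := by
  set w := (EU hA)ᴴ *ᵥ v with hw
  have h1 : A *ᵥ v = EU hA *ᵥ (diagonal (fun i => (hA.eigenvalues i : ℂ)) *ᵥ w) := by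
    conv_lhs => rw [spec hA]
    rw [← mulVec_mulVec, ← mulVec_mulVec]
  rw [h1, star_dot_mulVec]
  rw [show (EU hA)ᴴ *ᵥ v = w from rfl]
  rw [dotProduct, Complex.re_sum]
  congr 1; ext i
  rw [mulVec_diagonal]
  simp only [Pi.star_apply, ← mul_assoc]
  rw [mul_comm (star (w i)) _, mul_assoc]
  have : (star (w i) * w i) = ((‖w i‖^2 : ℝ) : ℂ) := by
    rw [Complex.star_def, ← Complex.normSq_eq_conj_mul_self, Complex.normSq_eq_norm_sq]
  rw [this, ← Complex.ofReal_mul]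
  exact Complex.ofReal_re _

lemma sum_w_eq (hA : A.IsHermitian) (v : Fin n → ℂ) :
    ∑ i, ‖((EU hA)ᴴ *ᵥ v) i‖ ^ 2 = ∑ i, ‖v i‖ ^ 2 :=
  sum_norm_sq_mulVec_unitary (EU_star_mul_star hA) v

end Square

section Eig
variable {A : Matrix (Fin n) (Fin n) ℂ}

lemma ofReal_mul_re (r : ℝ) (z : ℂ) : ((r : ℂ) * z).re = r * z.re := by
  simp [Complex.mul_re]

lemma sum_norm_sq_pos {v : Fin n → ℂ} (hv : v ≠ 0) : 0 < ∑ i, ‖v i‖ ^ 2 := by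
  obtain ⟨i, hi⟩ : ∃ i, v i ≠ 0 := by
    by_contra h; push_neg at h; exact hv (funext h)
  exact Finset.sum_pos' (fun j _ => by positivity)
    ⟨i, Finset.mem_univ i, by have := norm_pos_iff.mpr hi; positivity⟩

lemma l2norm_pos {v : Fin n → ℂ} (hv : v ≠ 0) : 0 < l2norm v :=
  Real.sqrt_pos.mpr (sum_norm_sq_pos hv)

lemma eig_bound_above (hA : A.IsHermitian) {r : ℝ} (hr : r ∈ realEigenvalues A) {c : ℝ}
    (hc : ∀ i, hA.eigenvalues i ≤ c) : r ≤ c := by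
  obtain ⟨v, hv, hAv⟩ := hr
  have h1 : (star v ⬝ᵥ (A *ᵥ v)).re = r * ∑ i, ‖v i‖ ^ 2 := by
    rw [hAv, dotProduct_smul, smul_eq_mul, ofReal_mul_re, dot_self_re]
  have h2 := dot_mulVec_re hA v
  have h3 : ∑ i, hA.eigenvalues i * ‖((EU hA)ᴴ *ᵥ v) i‖ ^ 2
      ≤ c * ∑ i, ‖v i‖ ^ 2 := by
    rw [← sum_w_eq hA v, Finset.mul_sum]
    exact Finset.sum_le_sum fun i _ => mul_le_mul_of_nonneg_right (hc i) (by positivity)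
  have hS := sum_norm_sq_pos hv
  nlinarith [h1, h2, h3]

lemma eig_bound_below (hA : A.IsHermitian) {r : ℝ} (hr : r ∈ realEigenvalues A) {c : ℝ}
    (hc : ∀ i, c ≤ hA.eigenvalues i) : c ≤ r := by
  obtain ⟨v, hv, hAv⟩ := hr
  have h1 : (star v ⬝ᵥ (A *ᵥ v)).re = r * ∑ i, ‖v i‖ ^ 2 := by
    rw [hAv, dotProduct_smul, smul_eq_mul, ofReal_mul_re, dot_self_re]
  have h2 := dot_mulVec_re hA v
  have h3 : c * ∑ i, ‖v i‖ ^ 2 ≤ ∑ i, hA.eigenvalues i * ‖((EU hA)ᴴ *ᵥ v) i‖ ^ 2 := by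
    rw [← sum_w_eq hA v, Finset.mul_sum]
    exact Finset.sum_le_sum fun i _ => mul_le_mul_of_nonneg_right (hc i) (by positivity)
  have hS := sum_norm_sq_pos hv
  nlinarith [h1, h2, h3]

lemma realEig_nonempty (hA : A.IsHermitian) (hn : 0 < n) : (realEigenvalues A).Nonempty :=
  ⟨hA.eigenvalues ⟨0, hn⟩, eig_mem hA ⟨0, hn⟩⟩

lemma exists_lambdaMax (hA : A.IsHermitian) (hn : 0 < n) :
    ∃ j, lambdaMax A = hA.eigenvalues j ∧ ∀ i, hA.eigenvalues i ≤ hA.eigenvalues j := by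
  obtain ⟨j, -, hj⟩ := Finset.exists_max_image Finset.univ hA.eigenvalues
    ⟨⟨0, hn⟩, Finset.mem_univ _⟩
  have hj' : ∀ i, hA.eigenvalues i ≤ hA.eigenvalues j := fun i => hj i (Finset.mem_univ i)
  refine ⟨j, le_antisymm ?_ ?_, hj'⟩
  · exact csSup_le (realEig_nonempty hA hn) (fun r hr => eig_bound_above hA hr hj')
  · exact le_csSup ⟨hA.eigenvalues j, fun r hr => eig_bound_above hA hr hj'⟩ (eig_mem hA j)

lemma exists_lambdaMin (hA : A.IsHermitian) (hn : 0 < n) :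
    ∃ j, lambdaMin A = hA.eigenvalues j ∧ ∀ i, hA.eigenvalues j ≤ hA.eigenvalues i := by
  obtain ⟨j, -, hj⟩ := Finset.exists_min_image Finset.univ hA.eigenvalues
    ⟨⟨0, hn⟩, Finset.mem_univ _⟩
  have hj' : ∀ i, hA.eigenvalues j ≤ hA.eigenvalues i := fun i => hj i (Finset.mem_univ i)
  refine ⟨j, le_antisymm ?_ ?_, hj'⟩
  · exact csInf_le ⟨hA.eigenvalues j, fun r hr => eig_bound_below hA hr hj'⟩ (eig_mem hA j)
  · exact le_csInf (realEig_nonempty hA hn) (fun r hr => eig_bound_below hA hr hj')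

lemma eig_le_lambdaMax (hA : A.IsHermitian) (hn : 0 < n) (i : Fin n) :
    hA.eigenvalues i ≤ lambdaMax A := by
  obtain ⟨j, hj, hmax⟩ := exists_lambdaMax hA hn
  rw [hj]; exact hmax i

lemma lambdaMin_le_eig (hA : A.IsHermitian) (hn : 0 < n) (i : Fin n) :
    lambdaMin A ≤ hA.eigenvalues i := by
  obtain ⟨j, hj, hmin⟩ := exists_lambdaMin hA hn
  rw [hj]; exact hmin i

lemma lambdaMin_le_lambdaMax (hA : A.IsHermitian) (hn : 0 < n) :
    lambdaMin A ≤ lambdaMax A :=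
  (lambdaMin_le_eig hA hn ⟨0, hn⟩).trans (eig_le_lambdaMax hA hn ⟨0, hn⟩)

/-- Quadratic-form bounds. -/
lemma quad_le_lambdaMax (hA : A.IsHermitian) (hn : 0 < n) (v : Fin n → ℂ) :
    (star v ⬝ᵥ (A *ᵥ v)).re ≤ lambdaMax A * ∑ i, ‖v i‖ ^ 2 := by
  rw [dot_mulVec_re hA, ← sum_w_eq hA v, Finset.mul_sum]
  exact Finset.sum_le_sum fun i _ =>
    mul_le_mul_of_nonneg_right (eig_le_lambdaMax hA hn i) (by positivity)

lemma lambdaMin_le_quad (hA : A.IsHermitian) (hn : 0 < n) (v : Fin n → ℂ) :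
    lambdaMin A * ∑ i, ‖v i‖ ^ 2 ≤ (star v ⬝ᵥ (A *ᵥ v)).re := by
  rw [dot_mulVec_re hA, ← sum_w_eq hA v, Finset.mul_sum]
  exact Finset.sum_le_sum fun i _ =>
    mul_le_mul_of_nonneg_right (lambdaMin_le_eig hA hn i) (by positivity)

end Eig

section PsdSqrt
open scoped MatrixOrder

lemma psd_sqrt_eq_cfc {n : ℕ} {A : Matrix (Fin n) (Fin n) ℂ} (hA : A.PosSemidef) :
    hA.sqrt = CFC.sqrt A := by
  rw [CFC.sqrt_eq_real_sqrt A hA.nonneg, cfcₙ_eq_cfc, hA.1.cfc_eq, IsHermitian.cfc,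
    Unitary.conjStarAlgAut_apply]
  rfl

lemma psd_eq_sqrt_of_sq_eq {n : ℕ} {S M : Matrix (Fin n) (Fin n) ℂ} (hS : S.PosSemidef)
    (hM : M.PosSemidef) (h : S ^ 2 = M) : S = hM.sqrt := by
  rw [psd_sqrt_eq_cfc, eq_comm]
  exact CFC.sqrt_unique (show S * S = M by rw [← h, sq]) hS.nonneg

end PsdSqrt

section TN
variable {A : Matrix (Fin n) (Fin n) ℂ}

lemma trace_unitary_conj {U : Matrix (Fin n) (Fin n) ℂ} (hU : Uᴴ * U = 1)
    (M : Matrix (Fin n) (Fin n) ℂ) : (U * M * Uᴴ).trace = M.trace := by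
  rw [trace_mul_cycle, hU, one_mul]

lemma trace_eq_sum_eig (hA : A.IsHermitian) : A.trace = ∑ i, (hA.eigenvalues i : ℂ) := by
  conv_lhs => rw [spec hA]
  rw [trace_unitary_conj (EU_star_mul hA), trace_diagonal]

lemma traceNorm_hermitian (hA : A.IsHermitian) :
    traceNorm A = ∑ i, |hA.eigenvalues i| := by
  set S := EU hA * diagonal (fun i => ((|hA.eigenvalues i| : ℝ) : ℂ)) * (EU hA)ᴴ with hSdef
  have hSpsd : S.PosSemidef := by
    apply Matrix.PosSemidef.mul_mul_conjTranspose_same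
    rw [posSemidef_diagonal_iff]
    intro i
    rw [Complex.zero_le_real]
    positivity
  have hsq : S ^ 2 = Aᴴ * A := by
    have hAA : Aᴴ * A = EU hA * diagonal (fun i => ((hA.eigenvalues i : ℂ) * (hA.eigenvalues i : ℂ))) * (EU hA)ᴴ := by
      conv_lhs => rw [hA.eq, spec hA]
      rw [show ∀ B C D E F G : Matrix (Fin n) (Fin n) ℂ, (B * C * D) * (E * F * G) = B * C * ((D * E) * F) * G by intros; noncomm_ring]
      rw [EU_star_mul hA, one_mul, mul_assoc (EU hA), diagonal_mul_diagonal]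
    rw [pow_two, hSdef]
    rw [show ∀ B C D E F G : Matrix (Fin n) (Fin n) ℂ, (B * C * D) * (E * F * G) = B * C * ((D * E) * F) * G by intros; noncomm_ring]
    rw [EU_star_mul hA, one_mul, mul_assoc (EU hA), diagonal_mul_diagonal, hAA]
    have hfe : (fun i => ((|hA.eigenvalues i| : ℝ) : ℂ) * ((|hA.eigenvalues i| : ℝ) : ℂ))
        = fun i => ((hA.eigenvalues i : ℝ) : ℂ) * ((hA.eigenvalues i : ℝ) : ℂ) := by
      funext i
      rw [← Complex.ofReal_mul, ← Complex.ofReal_mul, abs_mul_abs_self]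
    rw [hfe]
  have hsqrt : S = (Matrix.posSemidef_conjTranspose_mul_self A).sqrt :=
    psd_eq_sqrt_of_sq_eq hSpsd _ hsq
  rw [traceNorm, ← hsqrt, hSdef, trace_unitary_conj (EU_star_mul hA), trace_diagonal,
    Complex.re_sum]
  simp

lemma traceNorm_nonneg_herm (hA : A.IsHermitian) : 0 ≤ traceNorm A := by
  rw [traceNorm_hermitian hA]
  positivity

lemma traceNorm_pos (hA : A.IsHermitian) (h0 : A ≠ 0) : 0 < traceNorm A := by
  rw [traceNorm_hermitian hA]
  by_contra hc
  push_neg at hc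
  have h1 : ∑ i, |hA.eigenvalues i| = 0 :=
    le_antisymm hc (Finset.sum_nonneg fun i _ => abs_nonneg _)
  have hz : ∀ i ∈ Finset.univ, |hA.eigenvalues i| = 0 :=
    (Finset.sum_eq_zero_iff_of_nonneg (fun i _ => abs_nonneg _)).mp h1
  apply h0
  have hdz : (fun i => ((hA.eigenvalues i : ℝ) : ℂ)) = fun _ => (0 : ℂ) := by
    funext i
    exact_mod_cast abs_eq_zero.mp (hz i (Finset.mem_univ i))
  rw [spec hA, hdz]
  simp

lemma traceNorm_psd {M : Matrix (Fin n) (Fin n) ℂ} (hM : M.PosSemidef) :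
    traceNorm M = M.trace.re := by
  rw [traceNorm_hermitian hM.1, trace_eq_sum_eig hM.1, Complex.re_sum]
  congr 1; ext i
  rw [Complex.ofReal_re, abs_of_nonneg (hM.eigenvalues_nonneg i)]


lemma diag_entry_eq (M : Matrix (Fin n) (Fin n) ℂ) (i : Fin n) :
    M i i = star (Pi.single i (1:ℂ) : Fin n → ℂ) ⬝ᵥ (M *ᵥ Pi.single i 1) := by
  simp [dotProduct, mulVec_single, Pi.single_apply]

lemma trace_mul_re_eq (hA : A.IsHermitian) (X : Matrix (Fin n) (Fin n) ℂ) :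
    (X * A).trace.re = ∑ i, hA.eigenvalues i * (star (col hA i) ⬝ᵥ (X *ᵥ col hA i)).re := by
  have h1 : X * A = X * EU hA * diagonal (fun i => (hA.eigenvalues i : ℂ)) * (EU hA)ᴴ := by
    conv_lhs => rw [spec hA]
    noncomm_ring
  rw [h1, trace_mul_cycle]
  have h2 : (EU hA)ᴴ * (X * EU hA) * diagonal (fun i => (hA.eigenvalues i : ℂ))
      = ((EU hA)ᴴ * X * EU hA) * diagonal (fun i => (hA.eigenvalues i : ℂ)) := by noncomm_ring
  rw [← mul_assoc]
  rw [trace]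
  rw [Complex.re_sum]
  congr 1; ext i
  rw [diag_apply, mul_diagonal]
  have h3 : ((EU hA)ᴴ * X * EU hA) i i = star (col hA i) ⬝ᵥ (X *ᵥ col hA i) := by
    rw [diag_entry_eq ((EU hA)ᴴ * X * EU hA) i]
    rw [show ((EU hA)ᴴ * X * EU hA) *ᵥ Pi.single i 1
        = (EU hA)ᴴ *ᵥ (X *ᵥ (EU hA *ᵥ Pi.single i 1)) by
      rw [mulVec_mulVec, mulVec_mulVec]]
    rw [star_dot_mulVec, conjTranspose_conjTranspose]
    rfl
  rw [h3, mul_comm (star (col hA i) ⬝ᵥ (X *ᵥ col hA i)) _, ofReal_mul_re]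

end TN

section Op
variable {X : Matrix (Fin n) (Fin n) ℂ}

lemma l2norm_smul (c : ℂ) (v : Fin n → ℂ) : l2norm (c • v) = ‖c‖ * l2norm v := by
  unfold l2norm
  rw [show ∑ i, ‖(c • v) i‖ ^ 2 = ‖c‖^2 * ∑ i, ‖v i‖ ^ 2 by
    rw [Finset.mul_sum]; congr 1; ext i; simp [norm_smul]; ring]
  rw [Real.sqrt_mul (by positivity), Real.sqrt_sq (norm_nonneg c)]

lemma entry_le_l2norm (v : Fin n → ℂ) (i : Fin n) : ‖v i‖ ≤ l2norm v := by
  rw [← Real.sqrt_sq (norm_nonneg (v i))]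
  apply Real.sqrt_le_sqrt
  exact Finset.single_le_sum (f := fun j => ‖v j‖^2) (fun j _ => by positivity) (Finset.mem_univ i)

lemma opNorm_bddAbove (X : Matrix (Fin n) (Fin n) ℂ) :
    BddAbove {r : ℝ | ∃ v : Fin n → ℂ, l2norm v ≤ 1 ∧ r = l2norm (X.mulVec v)} := by
  refine ⟨Real.sqrt (∑ i, (∑ j, ‖X i j‖)^2), ?_⟩
  rintro r ⟨v, hv, rfl⟩
  unfold l2norm
  apply Real.sqrt_le_sqrt
  apply Finset.sum_le_sum
  intro i _
  have hb : ‖(X *ᵥ v) i‖ ≤ ∑ j, ‖X i j‖ := by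
    calc ‖(X *ᵥ v) i‖ = ‖∑ j, X i j * v j‖ := rfl
    _ ≤ ∑ j, ‖X i j * v j‖ := norm_sum_le _ _
    _ ≤ ∑ j, ‖X i j‖ := by
        apply Finset.sum_le_sum
        intro j _
        rw [norm_mul]
        calc ‖X i j‖ * ‖v j‖ ≤ ‖X i j‖ * 1 := by
              apply mul_le_mul_of_nonneg_left ((entry_le_l2norm v j).trans hv) (norm_nonneg _)
        _ = ‖X i j‖ := mul_one _
  have h0 : (0:ℝ) ≤ ‖(X *ᵥ v) i‖ := norm_nonneg _
  nlinarith
  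
lemma opNorm_le_one_contr (hX : opNorm X ≤ 1) (v : Fin n → ℂ) :
    l2norm (X *ᵥ v) ≤ l2norm v := by
  rcases eq_or_ne v 0 with rfl | hv
  · simp [l2norm]
  · have hc : 0 < l2norm v := l2norm_pos hv
    set u := ((l2norm v : ℂ))⁻¹ • v with hu
    have hnc : ‖((l2norm v : ℝ) : ℂ)‖ = l2norm v := by
      rw [Complex.norm_real, Real.norm_eq_abs]
      exact abs_of_pos hc
    have hu1 : l2norm u = 1 := by
      rw [hu, l2norm_smul, norm_inv, hnc]
      field_simp
    have hmem : l2norm (X *ᵥ u) ∈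
        {r : ℝ | ∃ v : Fin n → ℂ, l2norm v ≤ 1 ∧ r = l2norm (X.mulVec v)} :=
      ⟨u, le_of_eq hu1, rfl⟩
    have h1 : l2norm (X *ᵥ u) ≤ 1 :=
      le_trans (le_csSup (opNorm_bddAbove X) hmem) hX
    have h2 : X *ᵥ u = ((l2norm v : ℂ))⁻¹ • (X *ᵥ v) := by
      rw [hu, mulVec_smul]
    rw [h2, l2norm_smul, norm_inv, hnc] at h1
    have h3 := mul_le_mul_of_nonneg_left h1 hc.le
    rw [mul_one, ← mul_assoc, mul_inv_cancel₀ hc.ne', one_mul] at h3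
    exact h3

lemma contr_opNorm_le_one (h : ∀ v, l2norm (X *ᵥ v) ≤ l2norm v) : opNorm X ≤ 1 := by
  apply Real.sSup_le
  · rintro r ⟨v, hv, rfl⟩
    exact (h v).trans hv
  · norm_num


lemma l2norm_diag_mulVec_le (d : Fin n → ℂ) (hd : ∀ i, ‖d i‖ ≤ 1) (w : Fin n → ℂ) :
    l2norm (diagonal d *ᵥ w) ≤ l2norm w := by
  unfold l2norm
  apply Real.sqrt_le_sqrt
  apply Finset.sum_le_sum
  intro i _
  rw [mulVec_diagonal, norm_mul]
  have h1 := hd i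
  have h2 : (0:ℝ) ≤ ‖w i‖ := norm_nonneg _
  have h3 : (0:ℝ) ≤ ‖d i‖ := norm_nonneg _
  have h4 : ‖d i‖ * ‖w i‖ ≤ 1 * ‖w i‖ := mul_le_mul_of_nonneg_right h1 h2
  rw [one_mul] at h4
  have h5 : 0 ≤ ‖d i‖ * ‖w i‖ := mul_nonneg h3 h2
  nlinarith

/-- A Hermitian pairing bound: if `X` is an l²-contraction then `Re tr(X A) ≤ ‖A‖₁`. -/
lemma pairing_le_traceNorm {A : Matrix (Fin n) (Fin n) ℂ} (hA : A.IsHermitian)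
    (X : Matrix (Fin n) (Fin n) ℂ) (hX : ∀ v, l2norm (X *ᵥ v) ≤ l2norm v) :
    (X * A).trace.re ≤ traceNorm A := by
  rw [trace_mul_re_eq hA X, traceNorm_hermitian hA]
  apply Finset.sum_le_sum
  intro i _
  have hq : |(star (col hA i) ⬝ᵥ (X *ᵥ col hA i)).re| ≤ 1 := by
    have h1 : |(star (col hA i) ⬝ᵥ (X *ᵥ col hA i)).re| ≤ ‖star (col hA i) ⬝ᵥ (X *ᵥ col hA i)‖ :=
      Complex.abs_re_le_norm _
    refine h1.trans ?_
    refine (abs_dot_le _ _).trans ?_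
    rw [l2norm_col hA i, one_mul]
    exact (hX _).trans_eq (l2norm_col hA i)
  calc hA.eigenvalues i * (star (col hA i) ⬝ᵥ (X *ᵥ col hA i)).re
      ≤ |hA.eigenvalues i * (star (col hA i) ⬝ᵥ (X *ᵥ col hA i)).re| := le_abs_self _
  _ = |hA.eigenvalues i| * |(star (col hA i) ⬝ᵥ (X *ᵥ col hA i)).re| := abs_mul _ _
  _ ≤ |hA.eigenvalues i| * 1 := mul_le_mul_of_nonneg_left hq (abs_nonneg _)
  _ = |hA.eigenvalues i| := mul_one _

/-- Hermitian matrix whose eigenvalues all have absolute value ≤ 1 is an l²-contraction. -/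
lemma herm_contr_of_eig_bound {A : Matrix (Fin n) (Fin n) ℂ} (hA : A.IsHermitian)
    (h : ∀ i, |hA.eigenvalues i| ≤ 1) (v : Fin n → ℂ) : l2norm (A *ᵥ v) ≤ l2norm v := by
  have h1 : A *ᵥ v = EU hA *ᵥ (diagonal (fun i => (hA.eigenvalues i : ℂ)) *ᵥ ((EU hA)ᴴ *ᵥ v)) := by
    conv_lhs => rw [spec hA]
    rw [← mulVec_mulVec, ← mulVec_mulVec]
  rw [h1, l2norm_mulVec_unitary (EU_star_mul hA)]
  refine (l2norm_diag_mulVec_le _ (fun i => ?_) _).trans ?_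
  · rw [Complex.norm_real, Real.norm_eq_abs]; exact h i
  · rw [l2norm_mulVec_unitary (EU_star_mul_star hA)]

/-- The sign matrix of a Hermitian matrix. -/
def signM {A : Matrix (Fin n) (Fin n) ℂ} (hA : A.IsHermitian) : Matrix (Fin n) (Fin n) ℂ :=
  EU hA * diagonal (fun i => (if 0 ≤ hA.eigenvalues i then (1:ℂ) else -1)) * (EU hA)ᴴ

lemma signM_hermitian {A : Matrix (Fin n) (Fin n) ℂ} (hA : A.IsHermitian) :
    (signM hA).IsHermitian := by
  unfold signM Matrix.IsHermitian
  rw [conjTranspose_mul, conjTranspose_mul, conjTranspose_conjTranspose, diagonal_conjTranspose]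
  rw [show star (fun i => (if 0 ≤ hA.eigenvalues i then (1:ℂ) else -1))
      = fun i => (if 0 ≤ hA.eigenvalues i then (1:ℂ) else -1) by
    funext i; by_cases hb : 0 ≤ hA.eigenvalues i <;> simp [hb]]
  noncomm_ring

lemma signM_contr {A : Matrix (Fin n) (Fin n) ℂ} (hA : A.IsHermitian) (v : Fin n → ℂ) :
    l2norm (signM hA *ᵥ v) ≤ l2norm v := by
  unfold signM
  rw [← mulVec_mulVec, ← mulVec_mulVec, l2norm_mulVec_unitary (EU_star_mul hA)]
  refine (l2norm_diag_mulVec_le _ (fun i => ?_) _).trans ?_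
  · by_cases hb : 0 ≤ hA.eigenvalues i <;> simp [hb]
  · rw [l2norm_mulVec_unitary (EU_star_mul_star hA)]

lemma signM_pairing {A : Matrix (Fin n) (Fin n) ℂ} (hA : A.IsHermitian) :
    (signM hA * A).trace.re = traceNorm A := by
  have h1 : signM hA * A
      = EU hA * diagonal (fun i => (if 0 ≤ hA.eigenvalues i then (1:ℂ) else -1)
          * (hA.eigenvalues i : ℂ)) * (EU hA)ᴴ := by
    calc signM hA * A
        = (EU hA * diagonal (fun i => (if 0 ≤ hA.eigenvalues i then (1:ℂ) else -1)) * (EU hA)ᴴ)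
          * (EU hA * diagonal (fun i => (hA.eigenvalues i : ℂ)) * (EU hA)ᴴ) := by
            rw [← spec hA]; rfl
    _ = EU hA * diagonal (fun i => (if 0 ≤ hA.eigenvalues i then (1:ℂ) else -1)
          * (hA.eigenvalues i : ℂ)) * (EU hA)ᴴ := by
        rw [show ∀ B C D E F G : Matrix (Fin n) (Fin n) ℂ,
            (B * C * D) * (E * F * G) = B * (C * ((D * E) * F)) * G by intros; noncomm_ring]
        rw [EU_star_mul hA, one_mul, diagonal_mul_diagonal]
  rw [h1, trace_unitary_conj (EU_star_mul hA), trace_diagonal, Complex.re_sum,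
    traceNorm_hermitian hA]
  congr 1; ext i
  by_cases hb : 0 ≤ hA.eigenvalues i
  · simp [hb, abs_of_nonneg hb]
  · push_neg at hb
    simp only [hb.not_ge, if_false, neg_one_mul, abs_of_neg hb]
    rw [← Complex.ofReal_neg]
    exact Complex.ofReal_re _


lemma neg_contr {X : Matrix (Fin n) (Fin n) ℂ} (hX : ∀ v, l2norm (X *ᵥ v) ≤ l2norm v)
    (v : Fin n → ℂ) : l2norm ((-X) *ᵥ v) ≤ l2norm v := by
  rw [neg_mulVec]
  have : l2norm (-(X *ᵥ v)) = l2norm (X *ᵥ v) := by unfold l2norm; simp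
  rw [this]; exact hX v

lemma sum_norm_col_sq {A : Matrix (Fin n) (Fin n) ℂ} (hA : A.IsHermitian) (i : Fin n) : ∑ j, ‖col hA i j‖ ^ 2 = 1 := by
  have h := l2norm_col hA i
  have h3 := l2norm_sq (col hA i)
  rw [h] at h3
  simpa using h3.symm

lemma eig_eq_quad {A : Matrix (Fin n) (Fin n) ℂ} (hA : A.IsHermitian) (i : Fin n) :
    hA.eigenvalues i = (star (col hA i) ⬝ᵥ (A *ᵥ col hA i)).re := by
  rw [mulVec_col, dotProduct_smul, smul_eq_mul, ofReal_mul_re, dot_self_re,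
    sum_norm_col_sq hA i, mul_one]

lemma col_orthonormal {A : Matrix (Fin n) (Fin n) ℂ} (hA : A.IsHermitian) (i j : Fin n) :
    star (col hA i) ⬝ᵥ col hA j = if i = j then 1 else 0 := by
  unfold col
  rw [dot_unitary (EU_star_mul hA)]
  rcases eq_or_ne i j with rfl | hij
  · simp [dotProduct, Pi.single_apply]
  · rw [if_neg hij]
    simp [dotProduct, Pi.single_apply, Ne.symm hij]

/-- Rank-one outer product `u uᴴ`. -/
def outer (u : Fin n → ℂ) : Matrix (Fin n) (Fin n) ℂ :=
  Matrix.of (fun i j => u i * star (u j))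

lemma outer_mulVec (u v : Fin n → ℂ) : outer u *ᵥ v = (star u ⬝ᵥ v) • u := by
  funext i
  simp only [outer, mulVec, dotProduct, Pi.smul_apply, smul_eq_mul, of_apply]
  rw [Finset.sum_mul]
  congr 1; funext j
  simp only [Pi.star_apply]
  ring

lemma outer_psd (u : Fin n → ℂ) : (outer u).PosSemidef := by
  refine posSemidef_iff_dotProduct_mulVec.mpr ⟨?_, ?_⟩
  · ext i j
    simp [outer, conjTranspose_apply, mul_comm]
  · intro x
    rw [outer_mulVec, dotProduct_smul, smul_eq_mul]
    have h1 : star x ⬝ᵥ u = star (star u ⬝ᵥ x) := by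
      rw [star_dotProduct]
    rw [mul_comm, h1]
    exact star_mul_self_nonneg _

lemma outer_trace (u : Fin n → ℂ) : (outer u).trace = ((∑ i, ‖u i‖^2 : ℝ) : ℂ) := by
  rw [trace, Complex.ofReal_sum]
  congr 1; funext i
  simp only [diag_apply, outer, of_apply, Pi.star_apply, Complex.star_def, Complex.mul_conj]
  rw [Complex.normSq_eq_norm_sq]

lemma trace_mul_outer (B : Matrix (Fin n) (Fin n) ℂ) (u : Fin n → ℂ) :
    (B * outer u).trace = star u ⬝ᵥ (B *ᵥ u) := by
  simp only [trace, diag_apply, mul_apply, outer, of_apply, dotProduct, mulVec, Pi.star_apply,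
    Finset.mul_sum]
  apply Finset.sum_congr rfl
  intro i _
  apply Finset.sum_congr rfl
  intro j _
  ring


lemma sum_mulVec' {a b : ℕ} {κ : Type*} [Fintype κ] (M : κ → Matrix (Fin a) (Fin b) ℂ)
    (v : Fin b → ℂ) : (∑ i, M i) *ᵥ v = ∑ i, M i *ᵥ v := by
  funext j
  simp only [mulVec, dotProduct, Finset.sum_apply, Matrix.sum_apply, Finset.sum_mul]
  exact Finset.sum_comm

lemma dotProduct_sum' {b : ℕ} {κ : Type*} [Fintype κ] (v : Fin b → ℂ) (w : κ → Fin b → ℂ) :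
    v ⬝ᵥ (∑ i, w i) = ∑ i, v ⬝ᵥ w i := by
  simp only [dotProduct, Finset.sum_apply, Finset.mul_sum]
  exact Finset.sum_comm

lemma star_dot_mulVec_rect {a b : ℕ} (M : Matrix (Fin a) (Fin b) ℂ) (v : Fin a → ℂ)
    (x : Fin b → ℂ) : star v ⬝ᵥ (M *ᵥ x) = star (Mᴴ *ᵥ v) ⬝ᵥ x := by
  rw [star_mulVec, conjTranspose_conjTranspose, dotProduct_mulVec]

end Op

section Channel
variable {dA dB : ℕ} {ι : Type} [Fintype ι] (K : ι → Matrix (Fin dB) (Fin dA) ℂ)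

/-- The adjoint channel. -/
def Psi (X : Matrix (Fin dB) (Fin dB) ℂ) : Matrix (Fin dA) (Fin dA) ℂ :=
  ∑ i, (K i)ᴴ * X * K i

/-- The channel itself. -/
def Phi (x : Matrix (Fin dA) (Fin dA) ℂ) : Matrix (Fin dB) (Fin dB) ℂ :=
  ∑ i, K i * x * (K i)ᴴ

lemma Phi_sub (x y : Matrix (Fin dA) (Fin dA) ℂ) : Phi K x - Phi K y = Phi K (x - y) := by
  unfold Phi
  rw [← Finset.sum_sub_distrib]
  congr 1; funext i
  rw [Matrix.mul_sub, Matrix.sub_mul]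

lemma Psi_hermitian {X : Matrix (Fin dB) (Fin dB) ℂ} (hX : X.IsHermitian) :
    (Psi K X).IsHermitian := by
  unfold Psi Matrix.IsHermitian
  rw [conjTranspose_sum]
  congr 1; funext i
  rw [conjTranspose_mul, conjTranspose_mul, conjTranspose_conjTranspose, hX.eq,
    Matrix.mul_assoc]

lemma Phi_hermitian {x : Matrix (Fin dA) (Fin dA) ℂ} (hx : x.IsHermitian) :
    (Phi K x).IsHermitian := by
  unfold Phi Matrix.IsHermitian
  rw [conjTranspose_sum]
  congr 1; funext i
  rw [conjTranspose_mul, conjTranspose_mul, conjTranspose_conjTranspose, hx.eq,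
    Matrix.mul_assoc]

lemma trace_adjoint (X : Matrix (Fin dB) (Fin dB) ℂ) (Δ : Matrix (Fin dA) (Fin dA) ℂ) :
    (X * Phi K Δ).trace = (Psi K X * Δ).trace := by
  unfold Phi Psi
  rw [Finset.mul_sum, trace_sum, Finset.sum_mul, trace_sum]
  congr 1; funext i
  rw [← Matrix.mul_assoc, ← Matrix.mul_assoc, trace_mul_comm, ← Matrix.mul_assoc,
    ← Matrix.mul_assoc]

lemma Psi_quad (X : Matrix (Fin dB) (Fin dB) ℂ) (v : Fin dA → ℂ) :
    star v ⬝ᵥ (Psi K X *ᵥ v) = ∑ i, star (K i *ᵥ v) ⬝ᵥ (X *ᵥ (K i *ᵥ v)) := by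
  unfold Psi
  rw [sum_mulVec', dotProduct_sum']
  congr 1; funext i
  rw [← mulVec_mulVec, ← mulVec_mulVec, star_dot_mulVec_rect, conjTranspose_conjTranspose]

lemma K_norm (hK : ∑ i, (K i)ᴴ * K i = 1) (v : Fin dA → ℂ) :
    ∑ i, star (K i *ᵥ v) ⬝ᵥ (K i *ᵥ v) = star v ⬝ᵥ v := by
  have h1 : ∀ i : ι, star v ⬝ᵥ (((K i)ᴴ * K i) *ᵥ v) = star (K i *ᵥ v) ⬝ᵥ (K i *ᵥ v) := by
    intro i
    rw [← mulVec_mulVec, star_dot_mulVec_rect, conjTranspose_conjTranspose]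
  calc ∑ i, star (K i *ᵥ v) ⬝ᵥ (K i *ᵥ v)
      = ∑ i, star v ⬝ᵥ (((K i)ᴴ * K i) *ᵥ v) := Finset.sum_congr rfl (fun i _ => (h1 i).symm)
  _ = star v ⬝ᵥ ((∑ i, (K i)ᴴ * K i) *ᵥ v) := by rw [sum_mulVec', dotProduct_sum']
  _ = star v ⬝ᵥ v := by rw [hK, one_mulVec]

lemma Psi_quad_bound (hK : ∑ i, (K i)ᴴ * K i = 1) {X : Matrix (Fin dB) (Fin dB) ℂ}
    (hXc : ∀ v, l2norm (X *ᵥ v) ≤ l2norm v) (v : Fin dA → ℂ) :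
    |(star v ⬝ᵥ (Psi K X *ᵥ v)).re| ≤ ∑ i, ‖v i‖ ^ 2 := by
  rw [Psi_quad, Complex.re_sum]
  calc |∑ i, (star (K i *ᵥ v) ⬝ᵥ (X *ᵥ (K i *ᵥ v))).re|
      ≤ ∑ i, |(star (K i *ᵥ v) ⬝ᵥ (X *ᵥ (K i *ᵥ v))).re| := Finset.abs_sum_le_sum_abs _ _
  _ ≤ ∑ i, (star (K i *ᵥ v) ⬝ᵥ (K i *ᵥ v)).re := by
      apply Finset.sum_le_sum
      intro i _
      have c1 : |(star (K i *ᵥ v) ⬝ᵥ (X *ᵥ (K i *ᵥ v))).re|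
          ≤ ‖star (K i *ᵥ v) ⬝ᵥ (X *ᵥ (K i *ᵥ v))‖ := Complex.abs_re_le_norm _
      refine c1.trans ?_
      refine (abs_dot_le _ _).trans ?_
      have c2 : l2norm (X *ᵥ (K i *ᵥ v)) ≤ l2norm (K i *ᵥ v) := hXc _
      have c3 : 0 ≤ l2norm (K i *ᵥ v) := l2norm_nonneg _
      have c4 : l2norm (K i *ᵥ v) * l2norm (X *ᵥ (K i *ᵥ v))
          ≤ l2norm (K i *ᵥ v) * l2norm (K i *ᵥ v) := mul_le_mul_of_nonneg_left c2 c3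
      refine c4.trans ?_
      rw [← pow_two, l2norm_sq, dot_self_re]
  _ = (star v ⬝ᵥ v).re := by rw [← Complex.re_sum, K_norm K hK]
  _ = ∑ i, ‖v i‖ ^ 2 := dot_self_re v

lemma Psi_eig_bound (hK : ∑ i, (K i)ᴴ * K i = 1) {X : Matrix (Fin dB) (Fin dB) ℂ}
    (hX : X.IsHermitian) (hXc : ∀ v, l2norm (X *ᵥ v) ≤ l2norm v) (j : Fin dA) :
    |(Psi_hermitian K hX).eigenvalues j| ≤ 1 := by
  rw [eig_eq_quad (Psi_hermitian K hX) j]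
  have h1 := Psi_quad_bound K hK hXc (col (Psi_hermitian K hX) j)
  rwa [sum_norm_col_sq (Psi_hermitian K hX) j] at h1

lemma phi_contract (hK : ∑ i, (K i)ᴴ * K i = 1) {Δ : Matrix (Fin dA) (Fin dA) ℂ}
    (hΔ : Δ.IsHermitian) : traceNorm (Phi K Δ) ≤ traceNorm Δ := by
  have hΦΔ : (Phi K Δ).IsHermitian := Phi_hermitian K hΔ
  rw [← signM_pairing hΦΔ, trace_adjoint K (signM hΦΔ) Δ]
  exact pairing_le_traceNorm hΔ _
    (herm_contr_of_eig_bound (Psi_hermitian K (signM_hermitian hΦΔ))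
      (Psi_eig_bound K hK (signM_hermitian hΦΔ) (signM_contr hΦΔ)))

lemma central (hK : ∑ i, (K i)ᴴ * K i = 1) {X : Matrix (Fin dB) (Fin dB) ℂ}
    (hX : X.IsHermitian) (hXc : ∀ v, l2norm (X *ᵥ v) ≤ l2norm v)
    {Δ : Matrix (Fin dA) (Fin dA) ℂ} (hΔ : Δ.IsHermitian) (htr : Δ.trace = 0)
    (hn : 0 < dA) :
    (Psi K X * Δ).trace.re
      ≤ (lambdaMax (Psi K X) - lambdaMin (Psi K X)) * traceNorm Δ / 2 := by
  have hB : (Psi K X).IsHermitian := Psi_hermitian K hX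
  set M := lambdaMax (Psi K X) with hM
  set m := lambdaMin (Psi K X) with hm
  rw [trace_mul_re_eq hΔ (Psi K X)]
  have hq : ∀ i : Fin dA, m ≤ (star (col hΔ i) ⬝ᵥ (Psi K X *ᵥ col hΔ i)).re
      ∧ (star (col hΔ i) ⬝ᵥ (Psi K X *ᵥ col hΔ i)).re ≤ M := by
    intro i
    constructor
    · have := lambdaMin_le_quad hB hn (col hΔ i)
      rwa [sum_norm_col_sq hΔ i, mul_one] at this
    · have := quad_le_lambdaMax hB hn (col hΔ i)
      rwa [sum_norm_col_sq hΔ i, mul_one] at this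
  have hsum0 : ∑ i, hΔ.eigenvalues i = 0 := by
    have h1 := trace_eq_sum_eig hΔ
    rw [htr, ← Complex.ofReal_sum] at h1
    exact_mod_cast h1.symm
  have step : ∀ i : Fin dA, hΔ.eigenvalues i * (star (col hΔ i) ⬝ᵥ (Psi K X *ᵥ col hΔ i)).re
      ≤ (|hΔ.eigenvalues i| + hΔ.eigenvalues i) / 2 * M
        + (hΔ.eigenvalues i - |hΔ.eigenvalues i|) / 2 * m := by
    intro i
    obtain ⟨hlo, hhi⟩ := hq i
    rcases le_or_gt 0 (hΔ.eigenvalues i) with hpos | hneg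
    · rw [abs_of_nonneg hpos]
      have : hΔ.eigenvalues i * (star (col hΔ i) ⬝ᵥ (Psi K X *ᵥ col hΔ i)).re
          ≤ hΔ.eigenvalues i * M := mul_le_mul_of_nonneg_left hhi hpos
      nlinarith
    · rw [abs_of_neg hneg]
      have : hΔ.eigenvalues i * m ≥ hΔ.eigenvalues i
          * (star (col hΔ i) ⬝ᵥ (Psi K X *ᵥ col hΔ i)).re := by
        exact mul_le_mul_of_nonpos_left hlo hneg.le
      nlinarith
  calc ∑ i, hΔ.eigenvalues i * (star (col hΔ i) ⬝ᵥ (Psi K X *ᵥ col hΔ i)).re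
      ≤ ∑ i, ((|hΔ.eigenvalues i| + hΔ.eigenvalues i) / 2 * M
        + (hΔ.eigenvalues i - |hΔ.eigenvalues i|) / 2 * m) :=
        Finset.sum_le_sum (fun i _ => step i)
  _ = (∑ i, |hΔ.eigenvalues i|) * (M - m) / 2 + (∑ i, hΔ.eigenvalues i) * (M + m) / 2 := by
      rw [Finset.sum_add_distrib, ← Finset.sum_mul, ← Finset.sum_mul, ← Finset.sum_div,
        ← Finset.sum_div, Finset.sum_add_distrib, Finset.sum_sub_distrib]
      ring
  _ = (M - m) * traceNorm Δ / 2 := by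
      rw [hsum0, traceNorm_hermitian hΔ]
      ring

end Channel

section Final
variable {n : ℕ}

lemma realEig_dim0 (A : Matrix (Fin 0) (Fin 0) ℂ) : realEigenvalues A = ∅ := by
  rw [Set.eq_empty_iff_forall_notMem]
  rintro r ⟨v, hv, -⟩
  exact hv (funext fun i => i.elim0)

lemma lambdaMax_dim0 (A : Matrix (Fin 0) (Fin 0) ℂ) : lambdaMax A = 0 := by
  rw [lambdaMax, realEig_dim0, Real.sSup_empty]

lemma lambdaMin_dim0 (A : Matrix (Fin 0) (Fin 0) ℂ) : lambdaMin A = 0 := by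
  rw [lambdaMin, realEig_dim0, Real.sInf_empty]

lemma single_ne_zero' (hn : 0 < n) : (Pi.single (⟨0, hn⟩ : Fin n) (1:ℂ)) ≠ (0 : Fin n → ℂ) := by
  intro h
  have h1 := congrFun h ⟨0, hn⟩
  simp [Pi.single_apply] at h1

lemma realEig_zero (hn : 0 < n) : realEigenvalues (0 : Matrix (Fin n) (Fin n) ℂ) = {0} := by
  ext r
  simp only [realEigenvalues, Set.mem_setOf_eq, Set.mem_singleton_iff]
  constructor
  · rintro ⟨v, hv, h⟩
    rw [zero_mulVec] at h
    rcases smul_eq_zero.mp h.symm with h1 | h1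
    · exact_mod_cast h1
    · exact absurd h1 hv
  · rintro rfl
    refine ⟨Pi.single ⟨0, hn⟩ 1, single_ne_zero' hn, ?_⟩
    rw [zero_mulVec]
    simp

lemma l2norm_zero : l2norm (0 : Fin n → ℂ) = 0 := by simp [l2norm]

lemma traceNorm_sub_densities {ρ σ : Matrix (Fin n) (Fin n) ℂ}
    (hρ : IsDensity ρ) (hσ : IsDensity σ) : traceNorm (ρ - σ) ≤ 2 := by
  have hΔ : (ρ - σ).IsHermitian := hρ.1.1.sub hσ.1.1
  rw [← signM_pairing hΔ, Matrix.mul_sub, trace_sub, Complex.sub_re]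
  have h1 : (signM hΔ * ρ).trace.re ≤ 1 := by
    have h := pairing_le_traceNorm hρ.1.1 (signM hΔ) (signM_contr hΔ)
    rwa [traceNorm_psd hρ.1, hρ.2, Complex.one_re] at h
  have h2 : -1 ≤ (signM hΔ * σ).trace.re := by
    have h := pairing_le_traceNorm hσ.1.1 (-signM hΔ) (neg_contr (signM_contr hΔ))
    rw [Matrix.neg_mul, trace_neg, Complex.neg_re, traceNorm_psd hσ.1, hσ.2,
      Complex.one_re] at h
    linarith
  linarith

end Final
end QC

open QC

/-- `η_tr(Φ) = (1/2)·sup { λmax(Φ*(X)) − λmin(Φ*(X)) : X Hermitian, ‖X‖_∞ ≤ 1 }`,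
where `Φ*(X) = ∑ᵢ Kᵢᴴ X Kᵢ` is the adjoint channel. -/
theorem etaTr_eq_half_sup_lambda_diff {dA dB : ℕ} {ι : Type} [Fintype ι]
    (K : ι → Matrix (Fin dB) (Fin dA) ℂ)
    (hK : ∑ i, (K i)ᴴ * K i = 1)
    (Φ : Matrix (Fin dA) (Fin dA) ℂ → Matrix (Fin dB) (Fin dB) ℂ)
    (hΦ : ∀ x, Φ x = ∑ i, K i * x * (K i)ᴴ) :
    etaTr Φ = (1 / 2) * sSup {r : ℝ | ∃ X : Matrix (Fin dB) (Fin dB) ℂ,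
      X.IsHermitian ∧ opNorm X ≤ 1 ∧
      r = lambdaMax (∑ i, (K i)ᴴ * X * K i) - lambdaMin (∑ i, (K i)ᴴ * X * K i)} := by
  classical
  have hΦ' : ∀ x, Φ x = Phi K x := fun x => hΦ x
  set S2 : Set ℝ := {r : ℝ | ∃ X : Matrix (Fin dB) (Fin dB) ℂ,
      X.IsHermitian ∧ opNorm X ≤ 1 ∧
      r = lambdaMax (∑ i, (K i)ᴴ * X * K i) - lambdaMin (∑ i, (K i)ᴴ * X * K i)} with hS2def
  -- `0 ∈ S2` via `X = 0`
  have hP0 : Psi K (0 : Matrix (Fin dB) (Fin dB) ℂ) = 0 := by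
    unfold Psi
    apply Finset.sum_eq_zero
    intro i _
    rw [Matrix.mul_zero, Matrix.zero_mul]
  have hlam0 : (0:ℝ) = lambdaMax (Psi K (0 : Matrix (Fin dB) (Fin dB) ℂ))
      - lambdaMin (Psi K (0 : Matrix (Fin dB) (Fin dB) ℂ)) := by
    rcases Nat.eq_zero_or_pos dA with h0 | hn
    · subst h0
      rw [hP0, lambdaMax_dim0, lambdaMin_dim0, sub_zero]
    · rw [hP0, lambdaMax, lambdaMin, realEig_zero hn, csSup_singleton, csInf_singleton, sub_self]
  have h0S2 : (0:ℝ) ∈ S2 := by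
    refine ⟨0, isHermitian_zero, ?_, hlam0⟩
    apply contr_opNorm_le_one
    intro v
    rw [zero_mulVec, l2norm_zero]
    exact l2norm_nonneg v
  have hS2le2 : ∀ r ∈ S2, r ≤ 2 := by
    rintro r ⟨X, hX, hXop, rfl⟩
    have hXc := opNorm_le_one_contr hXop
    show lambdaMax (Psi K X) - lambdaMin (Psi K X) ≤ 2
    rcases Nat.eq_zero_or_pos dA with h0 | hn
    · subst h0
      rw [lambdaMax_dim0, lambdaMin_dim0]
      norm_num
    · have hB := Psi_hermitian K hX
      obtain ⟨jM, hjM, -⟩ := exists_lambdaMax hB hn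
      obtain ⟨jm, hjm, -⟩ := exists_lambdaMin hB hn
      have h1 := Psi_eig_bound K hK hX hXc jM
      have h2 := Psi_eig_bound K hK hX hXc jm
      rw [abs_le] at h1 h2
      rw [hjM, hjm]
      linarith [h1.1, h1.2, h2.1, h2.2]
  have hS2bdd : BddAbove S2 := ⟨2, fun r hr => hS2le2 r hr⟩
  have hS2nonneg : (0:ℝ) ≤ sSup S2 := le_csSup hS2bdd h0S2
  have hS1le1 : ∀ a ∈ {r : ℝ | ∃ ρ σ : Matrix (Fin dA) (Fin dA) ℂ,
      IsDensity ρ ∧ IsDensity σ ∧ ρ ≠ σ ∧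
      r = traceNorm (Φ ρ - Φ σ) / traceNorm (ρ - σ)}, a ≤ 1 := by
    rintro a ⟨ρ, σ, hρ, hσ, hρσ, rfl⟩
    have hΔh : (ρ - σ).IsHermitian := hρ.1.1.sub hσ.1.1
    have hΔpos := traceNorm_pos hΔh (sub_ne_zero.mpr hρσ)
    rw [hΦ' ρ, hΦ' σ, Phi_sub, div_le_one hΔpos]
    exact phi_contract K hK hΔh
  have hS1bdd : BddAbove {r : ℝ | ∃ ρ σ : Matrix (Fin dA) (Fin dA) ℂ,
      IsDensity ρ ∧ IsDensity σ ∧ ρ ≠ σ ∧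
      r = traceNorm (Φ ρ - Φ σ) / traceNorm (ρ - σ)} := ⟨1, hS1le1⟩
  have hη0 : (0:ℝ) ≤ etaTr Φ := by
    apply Real.sSup_nonneg
    rintro a ⟨ρ, σ, hρ, hσ, hρσ, rfl⟩
    have hΔh : (ρ - σ).IsHermitian := hρ.1.1.sub hσ.1.1
    apply div_nonneg ?_ (traceNorm_nonneg_herm hΔh)
    rw [hΦ' ρ, hΦ' σ, Phi_sub]
    exact traceNorm_nonneg_herm (Phi_hermitian K hΔh)
  apply le_antisymm
  · -- etaTr Φ ≤ (1/2) * sSup S2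
    apply Real.sSup_le
    · rintro a ⟨ρ, σ, hρ, hσ, hρσ, rfl⟩
      have hn : 0 < dA := by
        rcases Nat.eq_zero_or_pos dA with h0 | hn
        · exfalso
          apply hρσ
          subst h0
          funext i
          exact i.elim0
        · exact hn
      have hΔh : (ρ - σ).IsHermitian := hρ.1.1.sub hσ.1.1
      have hΔpos := traceNorm_pos hΔh (sub_ne_zero.mpr hρσ)
      have hsub : Φ ρ - Φ σ = Phi K (ρ - σ) := by rw [hΦ' ρ, hΦ' σ, Phi_sub]
      have hΦΔh : (Phi K (ρ - σ)).IsHermitian := Phi_hermitian K hΔh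
      have hX0h : (signM hΦΔh).IsHermitian := signM_hermitian hΦΔh
      have hX0c : ∀ v, l2norm (signM hΦΔh *ᵥ v) ≤ l2norm v := signM_contr hΦΔh
      have htr0 : (ρ - σ).trace = 0 := by rw [trace_sub, hρ.2, hσ.2, sub_self]
      have hkey : traceNorm (Phi K (ρ - σ))
          ≤ (lambdaMax (Psi K (signM hΦΔh)) - lambdaMin (Psi K (signM hΦΔh)))
            * traceNorm (ρ - σ) / 2 := by
        rw [← signM_pairing hΦΔh, trace_adjoint K (signM hΦΔh) (ρ - σ)]
        exact central K hK hX0h hX0c hΔh htr0 hn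
      have hmem : lambdaMax (Psi K (signM hΦΔh)) - lambdaMin (Psi K (signM hΦΔh)) ∈ S2 :=
        ⟨signM hΦΔh, hX0h, contr_opNorm_le_one hX0c, rfl⟩
      have hle : lambdaMax (Psi K (signM hΦΔh)) - lambdaMin (Psi K (signM hΦΔh)) ≤ sSup S2 :=
        le_csSup hS2bdd hmem
      rw [hsub, div_le_iff₀ hΔpos]
      calc traceNorm (Phi K (ρ - σ))
          ≤ (lambdaMax (Psi K (signM hΦΔh)) - lambdaMin (Psi K (signM hΦΔh)))
            * traceNorm (ρ - σ) / 2 := hkey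
      _ ≤ 1 / 2 * sSup S2 * traceNorm (ρ - σ) := by
          nlinarith [mul_le_mul_of_nonneg_right hle hΔpos.le]
    · nlinarith [hS2nonneg]
  · -- (1/2) * sSup S2 ≤ etaTr Φ
    have key : sSup S2 ≤ 2 * etaTr Φ := by
      apply Real.sSup_le
      · rintro r ⟨X, hX, hXop, rfl⟩
        have hXc := opNorm_le_one_contr hXop
        show lambdaMax (Psi K X) - lambdaMin (Psi K X) ≤ 2 * etaTr Φ
        rcases Nat.eq_zero_or_pos dA with h0 | hn
        · subst h0
          rw [lambdaMax_dim0, lambdaMin_dim0]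
          linarith
        · have hB := Psi_hermitian K hX
          obtain ⟨jM, hjM, -⟩ := exists_lambdaMax hB hn
          obtain ⟨jm, hjm, -⟩ := exists_lambdaMin hB hn
          rcases le_or_gt (lambdaMax (Psi K X) - lambdaMin (Psi K X)) 0 with hr0 | hrpos
          · linarith
          · have hjne : jm ≠ jM := by
              intro h
              rw [hjM, hjm, h] at hrpos
              simp at hrpos
            have huu : star (col hB jM) ⬝ᵥ col hB jM = 1 := by
              rw [col_orthonormal hB jM jM, if_pos rfl]
            have hwu : star (col hB jm) ⬝ᵥ col hB jM = 0 := by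
              rw [col_orthonormal hB jm jM, if_neg hjne]
            have hρd : IsDensity (outer (col hB jM)) :=
              ⟨outer_psd _, by rw [outer_trace, sum_norm_col_sq hB jM]; norm_num⟩
            have hσd : IsDensity (outer (col hB jm)) :=
              ⟨outer_psd _, by rw [outer_trace, sum_norm_col_sq hB jm]; norm_num⟩
            have hρσ : outer (col hB jM) ≠ outer (col hB jm) := by
              intro h
              have h1 : outer (col hB jM) *ᵥ col hB jM = col hB jM := by
                rw [outer_mulVec, huu, one_smul]
              have h2 : outer (col hB jm) *ᵥ col hB jM = 0 := by
                rw [outer_mulVec, hwu, zero_smul]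
              rw [h, h2] at h1
              exact col_ne_zero hB jM h1.symm
            have hΔh : (outer (col hB jM) - outer (col hB jm)).IsHermitian :=
              hρd.1.1.sub hσd.1.1
            have hΔpos := traceNorm_pos hΔh (sub_ne_zero.mpr hρσ)
            have hΔle2 := traceNorm_sub_densities hρd hσd
            have hsub : Φ (outer (col hB jM)) - Φ (outer (col hB jm))
                = Phi K (outer (col hB jM) - outer (col hB jm)) := by
              rw [hΦ' _, hΦ' _, Phi_sub]
            have hΦΔh := Phi_hermitian K hΔh
            have hval : (Psi K X * (outer (col hB jM) - outer (col hB jm))).trace.re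
                = lambdaMax (Psi K X) - lambdaMin (Psi K X) := by
              rw [Matrix.mul_sub, trace_sub, Complex.sub_re]
              have e1 : (Psi K X * outer (col hB jM)).trace.re = hB.eigenvalues jM := by
                rw [trace_mul_outer, ← eig_eq_quad hB jM]
              have e2 : (Psi K X * outer (col hB jm)).trace.re = hB.eigenvalues jm := by
                rw [trace_mul_outer, ← eig_eq_quad hB jm]
              rw [e1, e2, hjM, hjm]
            have hpair := pairing_le_traceNorm hΦΔh X hXc
            rw [trace_adjoint K X (outer (col hB jM) - outer (col hB jm)), hval] at hpair
            have ha_le : traceNorm (Φ (outer (col hB jM)) - Φ (outer (col hB jm)))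
                / traceNorm (outer (col hB jM) - outer (col hB jm)) ≤ etaTr Φ :=
              le_csSup hS1bdd ⟨_, _, hρd, hσd, hρσ, rfl⟩
            have hlow : (lambdaMax (Psi K X) - lambdaMin (Psi K X)) / 2
                ≤ traceNorm (Φ (outer (col hB jM)) - Φ (outer (col hB jm)))
                  / traceNorm (outer (col hB jM) - outer (col hB jm)) := by
              rw [hsub]
              exact div_le_div₀ (traceNorm_nonneg_herm hΦΔh) hpair hΔpos hΔle2
            linarith
      · linarith
    linarith
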